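/- arXiv:2101.03307 — 4 statements merged into one kernel-verified Lean document; each statement's English description precedes it below -/
import Mathlib

section
/- (Anisotropic Larson inequality) Let Ω, K ⊂ ℝⁿ be convex bodies with nonempty interior and r = r(Ω,K) the relative inradius. Then for every λ ≥ 0, Per_K(Ω ∼ λK) ≥ (1 − λ/r)₊^{n−1} · Per_K(Ω), where (·)₊ denotes the positive part. -/
open Pointwise MeasureTheory Set Topology Filter
open scoped ENNReal NNReal

noncomputable section

/-- The inner parallel body `Ω ∼ λK = {x : x + λK ⊆ Ω}`. -/
def innerPar {n : ℕ} (Ω K : Set (EuclideanSpace ℝ (Fin n))) (l : ℝ) :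
    Set (EuclideanSpace ℝ (Fin n)) :=
  {x | ∀ y ∈ K, x + l • y ∈ Ω}

/-- The inradius of `Ω` relative to `K`. -/
def inrad {n : ℕ} (Ω K : Set (EuclideanSpace ℝ (Fin n))) : ℝ :=
  sSup {l : ℝ | 0 ≤ l ∧ ∃ x, ∀ y ∈ K, x + l • y ∈ Ω}

/-- The anisotropic perimeter of `C` relative to `K`, realized as the anisotropic
Minkowski content `d/dt V_n(C + tK) |_{t=0⁺}`. -/
def aniPer {n : ℕ} (C K : Set (EuclideanSpace ℝ (Fin n))) : ℝ :=
  derivWithin (fun t : ℝ => (volume (C + t • K)).toReal) (Set.Ici (0:ℝ)) 0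

/-- The mixed volume `V(C,…,C,K,…,K)` with `i` copies of `K`, extracted as the
`i`-th Taylor coefficient (over `binom n i`) of `t ↦ V_n(C + tK)` at `t = 0⁺`. -/
def mixedVol {n : ℕ} (i : ℕ) (C K : Set (EuclideanSpace ℝ (Fin n))) : ℝ :=
  iteratedDerivWithin i (fun t : ℝ => (volume (C + t • K)).toReal) (Set.Ici (0:ℝ)) 0
    / (n.choose i * i.factorial)

namespace LarsonAux

abbrev Eu (n : ℕ) := EuclideanSpace ℝ (Fin n)

variable {n : ℕ}

lemma vol_vadd (v : Eu n) (A : Set (Eu n)) : volume (v +ᵥ A) = volume A :=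
  measure_vadd (μ := (volume : Measure (Eu n))) v A

lemma vol_add_singleton (A : Set (Eu n)) (v : Eu n) : volume (A + {v}) = volume A := by
  rw [add_comm, singleton_add, show (fun x => v + x) '' A = v +ᵥ A from rfl, vol_vadd]

lemma smul_set_add' (c : ℝ) (A B : Set (Eu n)) : c • (A + B) = c • A + c • B := by
  ext x
  simp only [mem_smul_set, Set.mem_add]
  constructor
  · rintro ⟨y, ⟨a, ha, b, hb, rfl⟩, rfl⟩
    exact ⟨c • a, ⟨a, ha, rfl⟩, c • b, ⟨b, hb, rfl⟩, (smul_add c a b).symm⟩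
  · rintro ⟨_, ⟨a, ha, rfl⟩, _, ⟨b, hb, rfl⟩, rfl⟩
    exact ⟨a + b, ⟨a, ha, b, hb, rfl⟩, smul_add c a b⟩

lemma subset_add_right {A K : Set (Eu n)} (h0 : (0 : Eu n) ∈ K) : A ⊆ A + K := fun a ha => by
  have := add_mem_add ha h0
  rwa [add_zero] at this

/-- Cutting a convex body by a halfspace does not increase the volume gap `|C + K| - |C|`. -/
lemma cut_le {B K : Set (Eu n)} (hBc : IsCompact B) (hBconv : Convex ℝ B)
    (hKc : IsCompact K) (h0K : (0 : Eu n) ∈ K)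
    (φ : Eu n →L[ℝ] ℝ) (c : ℝ) :
    volume ((B ∩ {x | φ x ≤ c}) + K) + volume B
      ≤ volume (B + K) + volume (B ∩ {x | φ x ≤ c}) := by
  rcases B.eq_empty_or_nonempty with rfl | hBne
  · simp
  classical
  set A := B ∩ {x | φ x ≤ c} with hA
  have hAB : A ⊆ B := inter_subset_left
  have hAc : IsCompact A := hBc.inter_right (isClosed_le φ.continuous continuous_const)
  have hKne : K.Nonempty := ⟨0, h0K⟩
  obtain ⟨k, hkK, hkmax⟩ := hKc.exists_isMaxOn hKne φ.continuous.continuousOn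
  set h := φ k with hh_def
  have hh : 0 ≤ h := by
    have := hkmax h0K
    simpa using this
  -- measurability
  have hBm : MeasurableSet B := hBc.isClosed.measurableSet
  have hAm : MeasurableSet A := hAc.isClosed.measurableSet
  have hBKm : MeasurableSet (B + K) := (hBc.add hKc).isClosed.measurableSet
  -- decompose volumes
  have eA : volume A + volume ((A + K) \ A) = volume (A + K) := by
    have h1 := measure_inter_add_diff (μ := (volume : Measure (Eu n))) (A + K) hAm
    rwa [inter_eq_right.2 (subset_add_right h0K)] at h1
  have eB : volume B + volume ((B + K) \ B) = volume (B + K) := by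
    have h1 := measure_inter_add_diff (μ := (volume : Measure (Eu n))) (B + K) hBm
    rwa [inter_eq_right.2 (subset_add_right h0K)] at h1
  set slab := B ∩ {x | c < φ x ∧ φ x ≤ c + h} with hslab_def
  set S₁ := ((B + K) \ B) ∩ {x | φ x ≤ c + h} with hS₁_def
  set collar := ((B + K) \ B) ∩ {x | c + h < φ x} with hcollar_def
  have hcollarm : MeasurableSet collar :=
    (hBKm.diff hBm).inter (measurableSet_lt measurable_const φ.continuous.measurable)
  have hslabm : MeasurableSet slab := by
    have : {x : Eu n | c < φ x ∧ φ x ≤ c + h} = φ ⁻¹' (Ioc c (c + h)) := rfl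
    exact hBm.inter (this ▸ φ.continuous.measurable measurableSet_Ioc)
  -- covering of the A-gap
  have hcover : (A + K) \ A ⊆ S₁ ∪ slab := by
    rintro x ⟨hxAK, hxA⟩
    have hφx : φ x ≤ c + h := by
      obtain ⟨a, haA, y, hyK, rfl⟩ := hxAK
      have h1 : φ a ≤ c := haA.2
      have h2 : φ y ≤ h := hkmax hyK
      rw [map_add]; linarith
    by_cases hxB : x ∈ B
    · right
      have hc : c < φ x := by
        by_contra hle
        push_neg at hle
        exact hxA ⟨hxB, hle⟩
      exact ⟨hxB, hc, hφx⟩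
    · left
      refine ⟨⟨?_, hxB⟩, hφx⟩
      obtain ⟨a, haA, y, hyK, rfl⟩ := hxAK
      exact add_mem_add (hAB haA) hyK
  -- slab vs collar
  have hslab_le : volume slab ≤ volume collar := by
    rcases eq_or_lt_of_le hh with hzero | hpos
    · have : slab = ∅ := by
        ext x
        simp only [hslab_def, mem_inter_iff, mem_setOf_eq, mem_empty_iff_false, iff_false,
          not_and]
        intro _ h1
        rw [← hzero, add_zero]
        exact not_le.2 h1
      simp [this]
    · -- piecewise translation argument
      set Sm : ℕ → Set (Eu n) := fun m =>
        (slab ∩ {x | x + (m + 1) • k ∉ B}) ∩ ⋂ j ∈ Finset.range m, {x | x + (j + 1) • k ∈ B}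
        with hSm_def
      have hSmm : ∀ m, MeasurableSet (Sm m) := by
        intro m
        refine (hslabm.inter ?_).inter ?_
        · exact (hBm.preimage (measurable_id.add_const _)).compl
        · exact MeasurableSet.biInter (Finset.range m).countable_toSet
            (fun j _ => hBm.preimage (measurable_id.add_const _))
      have hphi_nsmul : ∀ (m : ℕ) (x : Eu n), φ (x + (m + 1) • k) = φ x + ((m : ℝ) + 1) * h := by
        intro m x
        rw [map_add, map_nsmul, nsmul_eq_mul]
        push_cast
        ring
      have hcover2 : slab ⊆ ⋃ m, Sm m := by
        intro x hx
        have hesc : ∃ m : ℕ, x + (m + 1) • k ∉ B := by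
          obtain ⟨b0, _, hbmax⟩ := hBc.exists_isMaxOn hBne φ.continuous.continuousOn
          obtain ⟨m, hm⟩ := exists_nat_gt ((φ b0 - φ x) / h)
          refine ⟨m, fun hmem => ?_⟩
          have h1 : φ (x + (m + 1) • k) ≤ φ b0 := hbmax hmem
          rw [hphi_nsmul] at h1
          rw [div_lt_iff₀ hpos] at hm
          nlinarith
        refine mem_iUnion.2 ⟨Nat.find hesc, ⟨⟨hx, Nat.find_spec hesc⟩, ?_⟩⟩
        simp only [mem_iInter, Finset.mem_range, mem_setOf_eq]
        intro j hj
        by_contra hnot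
        exact (Nat.find_min hesc hj) hnot
      set U : ℕ → Set (Eu n) := fun m => ((m + 1) • k) +ᵥ Sm m with hU_def
      have hUm : ∀ m, MeasurableSet (U m) := fun m => (hSmm m).const_vadd _
      have hUsub : ∀ m, U m ⊆ collar := by
        rintro m _ ⟨x, hxS, rfl⟩
        obtain ⟨⟨hxslab, hnotB⟩, hprev⟩ := hxS
        have hxB : x ∈ B := hxslab.1
        have hφs : c < φ x ∧ φ x ≤ c + h := hxslab.2
        have hmem_add : x + (m + 1) • k ∈ B + K := by
          rcases Nat.eq_zero_or_pos m with rfl | hmpos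
          · have : x + (0 + 1) • k = x + k := by simp
            rw [this]
            exact add_mem_add hxB hkK
          · obtain ⟨j, rfl⟩ := Nat.exists_eq_succ_of_ne_zero hmpos.ne'
            have hjm : x + (j + 1) • k ∈ B := by
              have := hprev
              simp only [mem_iInter, Finset.mem_range, mem_setOf_eq] at this
              exact this j (Nat.lt_succ_self j)
            have : x + (j + 1 + 1) • k = (x + (j + 1) • k) + k := by
              rw [succ_nsmul, add_assoc]
            rw [this]
            exact add_mem_add hjm hkK
        have heq : (m + 1) • k +ᵥ x = x + (m + 1) • k := by
          simp [vadd_eq_add, add_comm]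
        change ((m + 1) • k +ᵥ x) ∈ collar
        rw [heq]
        refine ⟨⟨hmem_add, hnotB⟩, ?_⟩
        show c + h < φ (x + (m + 1) • k)
        rw [hphi_nsmul]
        have : (1 : ℝ) ≤ (m : ℝ) + 1 := by
          have := Nat.cast_nonneg (α := ℝ) m
          linarith
        nlinarith [hφs.1]
      have hUdisj : Pairwise (Function.onFun Disjoint U) := by
        intro m m' hne
        rw [Function.onFun, Set.disjoint_left]
        rintro _ ⟨x, hxS, rfl⟩ ⟨x', hxS', heq⟩
        have hx : c < φ x ∧ φ x ≤ c + h := hxS.1.1.2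
        have hx' : c < φ x' ∧ φ x' ≤ c + h := hxS'.1.1.2
        have heq' : (m' + 1) • k +ᵥ x' = (m + 1) • k +ᵥ x := heq
        have heq2 : x' + (m' + 1) • k = x + (m + 1) • k := by
          have e1 : (m' + 1) • k +ᵥ x' = x' + (m' + 1) • k := by simp [vadd_eq_add, add_comm]
          have e2 : (m + 1) • k +ᵥ x = x + (m + 1) • k := by simp [vadd_eq_add, add_comm]
          rw [← e1, ← e2, heq']
        have hφeq : φ x' + ((m' : ℝ) + 1) * h = φ x + ((m : ℝ) + 1) * h := by
          have h1 := congrArg φ heq2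
          rwa [hphi_nsmul, hphi_nsmul] at h1
        rcases hne.lt_or_gt with hlt | hlt
        · have : (m : ℝ) + 1 ≤ (m' : ℝ) := by exact_mod_cast hlt
          nlinarith
        · have : (m' : ℝ) + 1 ≤ (m : ℝ) := by exact_mod_cast hlt
          nlinarith
      calc volume slab ≤ volume (⋃ m, Sm m) := measure_mono hcover2
        _ ≤ ∑' m, volume (Sm m) := measure_iUnion_le _
        _ = ∑' m, volume (U m) := by
            refine tsum_congr fun m => ?_
            rw [hU_def]
            exact (vol_vadd _ _).symm
        _ = volume (⋃ m, U m) := (measure_iUnion hUdisj hUm).symm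
        _ ≤ volume collar := measure_mono (iUnion_subset hUsub)
  -- put everything together
  have hgap : volume ((A + K) \ A) ≤ volume ((B + K) \ B) := by
    have hdisj : Disjoint S₁ collar := by
      rw [Set.disjoint_left]
      rintro x ⟨_, hle⟩ ⟨_, hlt⟩
      simp only [mem_setOf_eq] at hle hlt
      linarith
    calc volume ((A + K) \ A) ≤ volume (S₁ ∪ slab) := measure_mono hcover
      _ ≤ volume S₁ + volume slab := measure_union_le _ _
      _ ≤ volume S₁ + volume collar := by gcongr
      _ = volume (S₁ ∪ collar) := (measure_union hdisj hcollarm).symm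
      _ ≤ volume ((B + K) \ B) := measure_mono (union_subset inter_subset_left inter_subset_left)
  calc volume (A + K) + volume B
      = (volume A + volume ((A + K) \ A)) + volume B := by rw [eA]
    _ = (volume A + volume B) + volume ((A + K) \ A) := by ring
    _ ≤ (volume A + volume B) + volume ((B + K) \ B) := by gcongr
    _ = (volume B + volume ((B + K) \ B)) + volume A := by ring
    _ = volume (B + K) + volume A := by rw [eB]

lemma toReal_gap_le {a b c d : ℝ≥0∞} (ha : a ≠ ⊤) (hb : b ≠ ⊤) (hc : c ≠ ⊤) (hd : d ≠ ⊤)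
    (h : a + d ≤ c + b) : a.toReal - b.toReal ≤ c.toReal - d.toReal := by
  have h' := (ENNReal.toReal_le_toReal (ENNReal.add_ne_top.2 ⟨ha, hd⟩) (ENNReal.add_ne_top.2 ⟨hc, hb⟩)).2 h
  rw [ENNReal.toReal_add ha hd, ENNReal.toReal_add hc hb] at h'
  linarith

/-- Monotonicity of the volume gap `|C + K| - |C|` among nested compact convex sets. -/
lemma gap_mono {A B K : Set (Eu n)} (hAc : IsCompact A) (hAconv : Convex ℝ A)
    (hBc : IsCompact B) (hBconv : Convex ℝ B) (hKc : IsCompact K) (h0K : (0 : Eu n) ∈ K)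
    (hAB : A ⊆ B) :
    (volume (A + K)).toReal - (volume A).toReal
      ≤ (volume (B + K)).toReal - (volume B).toReal := by
  classical
  -- a countable family of halfspaces whose intersection is `A`
  have hfam : ∀ p : ℕ × ℕ, ∃ (φ : Eu n →L[ℝ] ℝ) (c : ℝ), (∀ a ∈ A, φ a ≤ c) ∧
      (Disjoint A (Metric.closedBall (TopologicalSpace.denseSeq (Eu n) p.1)
          (1 / ((p.2 : ℝ) + 1))) →
        ∀ b ∈ Metric.closedBall (TopologicalSpace.denseSeq (Eu n) p.1) (1 / ((p.2 : ℝ) + 1)),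
          c < φ b) := by
    intro p
    by_cases hd : Disjoint A (Metric.closedBall (TopologicalSpace.denseSeq (Eu n) p.1)
        (1 / ((p.2 : ℝ) + 1)))
    · obtain ⟨f, u, v, hfu, huv, hfv⟩ := geometric_hahn_banach_closed_compact
        hAconv hAc.isClosed (convex_closedBall _ _) (isCompact_closedBall _ _) hd
      exact ⟨f, u, fun a ha => (hfu a ha).le, fun _ b hb => huv.trans (hfv b hb)⟩
    · exact ⟨0, 0, fun a _ => le_refl 0, fun hdis => absurd hdis hd⟩
  choose Φ Cc hΦA hΦball using hfam
  have hAeq : (⋂ p : ℕ × ℕ, {x : Eu n | Φ p x ≤ Cc p}) = A := by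
    apply Subset.antisymm
    · intro x hx
      by_contra hxA
      obtain ⟨ε0, hε0, hball0⟩ := Metric.isOpen_iff.1 hAc.isClosed.isOpen_compl x hxA
      set ε := min ε0 1 with hεdef
      have hε : 0 < ε := lt_min hε0 one_pos
      have hε1 : ε ≤ 1 := min_le_right _ _
      have hball : Metric.ball x ε ⊆ Aᶜ := (Metric.ball_subset_ball (min_le_left _ _)).trans hball0
      obtain ⟨i, hi⟩ := Metric.denseRange_iff.1 (TopologicalSpace.denseRange_denseSeq (Eu n))
        x (ε / 8) (by positivity)
      have hex : ∃ j : ℕ, 1 / ((j : ℝ) + 1) < ε / 4 := by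
        obtain ⟨N, hN⟩ := exists_nat_gt (4 / ε)
        refine ⟨N, ?_⟩
        rw [div_lt_div_iff₀ (by positivity) (by norm_num)]
        rw [div_lt_iff₀ hε] at hN
        nlinarith
      set j := Nat.find hex with hjdef
      have hj2 : 1 / ((j : ℝ) + 1) < ε / 4 := Nat.find_spec hex
      have hj1 : ε / 8 ≤ 1 / ((j : ℝ) + 1) := by
        rcases Nat.eq_zero_or_pos j with hj0 | hjpos
        · exfalso
          rw [hj0] at hj2
          norm_num at hj2
          linarith
        · have hmin := Nat.find_min hex (Nat.sub_one_lt hjpos.ne')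
          push_neg at hmin
          have hjc : (1 : ℝ) ≤ (j : ℝ) := by exact_mod_cast hjpos
          have hcast : ((j - 1 : ℕ) : ℝ) = (j : ℝ) - 1 := by
            have := Nat.cast_sub (R := ℝ) hjpos
            simpa using this
          rw [hcast] at hmin
          have h4 : ε / 4 ≤ 1 / ((j : ℝ) - 1 + 1) := hmin
          have hjj : (j : ℝ) - 1 + 1 = (j : ℝ) := by ring
          rw [hjj] at h4
          have hjpos' : (0 : ℝ) < (j : ℝ) := by linarith
          rw [div_le_div_iff₀ (by positivity) (by positivity)] at h4 ⊢
          nlinarith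
      set z := TopologicalSpace.denseSeq (Eu n) i with hzdef
      set ρ := 1 / ((j : ℝ) + 1) with hρdef
      have hdisj : Disjoint A (Metric.closedBall z ρ) := by
        rw [Set.disjoint_left]
        intro a haA hacb
        have h1 : dist a z ≤ ρ := Metric.mem_closedBall.1 hacb
        have h2 : dist z x < ε / 8 := by rw [dist_comm]; exact hi
        have : a ∈ Metric.ball x ε := by
          rw [Metric.mem_ball]
          calc dist a x ≤ dist a z + dist z x := dist_triangle a z x
            _ < ρ + ε / 8 := by linarith
            _ < ε := by rw [hρdef]; linarith
        exact hball this haA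
      have hxball : x ∈ Metric.closedBall z ρ := by
        rw [Metric.mem_closedBall]
        exact le_of_lt (lt_of_lt_of_le hi hj1)
      have hlt := hΦball (i, j) hdisj x hxball
      have hle := mem_iInter.1 hx (i, j)
      exact absurd hle (not_le.2 hlt)
    · intro x hxA
      exact mem_iInter.2 fun p => hΦA p x hxA
  -- enumerate the halfspaces
  set e : ℕ → ℕ × ℕ := fun i => (Denumerable.eqv (ℕ × ℕ)).symm i with hedef
  have hesurj : Function.Surjective e := (Denumerable.eqv (ℕ × ℕ)).symm.surjective
  set G : ℕ → Set (Eu n) := fun i => {x | Φ (e i) x ≤ Cc (e i)} with hGdef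
  set Aseq : ℕ → Set (Eu n) := fun m => B ∩ ⋂ i ∈ Finset.range m, G i with hAseqdef
  have hGclosed : ∀ i, IsClosed (G i) := fun i =>
    isClosed_le (Φ (e i)).continuous continuous_const
  have hGconv : ∀ i, Convex ℝ (G i) := fun i => by
    have : G i = {x | Φ (e i) x ≤ Cc (e i)} := rfl
    exact convex_halfSpace_le ⟨map_add _, map_smul _⟩ _
  have hAseqB : ∀ m, Aseq m ⊆ B := fun m => inter_subset_left
  have hAseqc : ∀ m, IsCompact (Aseq m) := fun m =>
    hBc.inter_right (isClosed_biInter fun i _ => hGclosed i)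
  have hAseqconv : ∀ m, Convex ℝ (Aseq m) := fun m =>
    hBconv.inter (convex_iInter₂ fun i _ => hGconv i)
  have hstep : ∀ m, Aseq (m + 1) = Aseq m ∩ {x | Φ (e m) x ≤ Cc (e m)} := by
    intro m
    ext x
    simp only [hAseqdef, mem_inter_iff, mem_iInter, Finset.mem_range, mem_setOf_eq, hGdef]
    constructor
    · rintro ⟨hB, hall⟩
      exact ⟨⟨hB, fun i hi => hall i (hi.trans (Nat.lt_succ_self m))⟩, hall m (Nat.lt_succ_self m)⟩
    · rintro ⟨⟨hB, hall⟩, hm⟩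
      refine ⟨hB, fun i hi => ?_⟩
      rcases Nat.lt_succ_iff_lt_or_eq.1 hi with h | h
      · exact hall i h
      · subst h; exact hm
  have hsucc : ∀ m, Aseq (m + 1) ⊆ Aseq m := fun m => by rw [hstep m]; exact inter_subset_left
  have hanti : Antitone Aseq := antitone_nat_of_succ_le hsucc
  have hAsub : ∀ m, A ⊆ Aseq m := fun m =>
    subset_inter hAB (by
      intro x hx
      refine mem_iInter₂.2 fun i _ => ?_
      exact hΦA (e i) x hx)
  -- the key inequality along the sequence
  have hcut : ∀ m, (volume (Aseq m + K)).toReal - (volume (Aseq m)).toReal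
      ≤ (volume (B + K)).toReal - (volume B).toReal := by
    intro m
    induction m with
    | zero =>
      have h0 : Aseq 0 = B := by simp [hAseqdef]
      rw [h0]
    | succ m ih =>
      have hc := cut_le (hAseqc m) (hAseqconv m) hKc h0K (Φ (e m)) (Cc (e m))
      rw [← hstep m] at hc
      have hreal := toReal_gap_le
        (((hAseqc (m + 1)).add hKc).measure_lt_top).ne
        ((hAseqc (m + 1)).measure_lt_top).ne
        (((hAseqc m).add hKc).measure_lt_top).ne
        ((hAseqc m).measure_lt_top).ne hc
      linarith
  -- pass to the limit
  have hiInter : ⋂ m, Aseq m = A := by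
    apply Subset.antisymm
    · intro x hx
      rw [← hAeq]
      refine mem_iInter.2 fun p => ?_
      obtain ⟨i, rfl⟩ := hesurj p
      have := mem_iInter.1 hx (i + 1)
      rw [hstep i] at this
      exact this.2
    · exact subset_iInter fun m => hAsub m
  have hiInterK : ⋂ m, (Aseq m + K) = A + K := by
    apply Subset.antisymm
    · intro x hx
      have hch : ∀ m, ∃ q : Eu n × Eu n, q.1 ∈ Aseq m ∧ q.2 ∈ K ∧ q.1 + q.2 = x := by
        intro m
        obtain ⟨a, ha, y, hy, hxy⟩ := mem_iInter.1 hx m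
        exact ⟨(a, y), ha, hy, hxy⟩
      choose q hq1 hq2 hq3 using hch
      have hqmem : ∀ m, q m ∈ B ×ˢ K := fun m => ⟨hAseqB m (hq1 m), hq2 m⟩
      obtain ⟨p, hp, σ, hσmono, hσtend⟩ := (hBc.prod hKc).tendsto_subseq hqmem
      have h1 : Filter.Tendsto (fun m => (q (σ m)).1) Filter.atTop (𝓝 p.1) :=
        ((continuous_fst.tendsto p).comp hσtend)
      have h2 : Filter.Tendsto (fun m => (q (σ m)).2) Filter.atTop (𝓝 p.2) :=
        ((continuous_snd.tendsto p).comp hσtend)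
      have hp1 : p.1 ∈ ⋂ m, Aseq m := by
        refine mem_iInter.2 fun m => ?_
        refine (hAseqc m).isClosed.mem_of_tendsto h1 ?_
        refine Filter.eventually_atTop.2 ⟨m, fun i hi => ?_⟩
        exact hanti (hi.trans (hσmono.le_apply)) (hq1 (σ i))
      have hsum : p.1 + p.2 = x := by
        have hconst : Filter.Tendsto (fun m => (q (σ m)).1 + (q (σ m)).2)
            Filter.atTop (𝓝 x) := by
          have : (fun m => (q (σ m)).1 + (q (σ m)).2) = fun _ => x := by
            funext m; exact hq3 (σ m)
          rw [this]
          exact tendsto_const_nhds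
        exact tendsto_nhds_unique (h1.add h2) hconst
      rw [← hsum]
      rw [hiInter] at hp1
      exact add_mem_add hp1 hp.2
    · refine subset_iInter fun m => ?_
      exact add_subset_add_right (hAsub m)
  have hfinB : volume B ≠ ⊤ := hBc.measure_lt_top.ne
  have hfinBK : volume (B + K) ≠ ⊤ := (hBc.add hKc).measure_lt_top.ne
  have ht1 : Filter.Tendsto (fun m => volume (Aseq m)) Filter.atTop (𝓝 (volume A)) := by
    rw [← hiInter]
    exact tendsto_measure_iInter_atTop
      (fun m => (hAseqc m).isClosed.measurableSet.nullMeasurableSet) hanti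
      ⟨0, ((hAseqc 0).measure_lt_top).ne⟩
  have ht2 : Filter.Tendsto (fun m => volume (Aseq m + K)) Filter.atTop (𝓝 (volume (A + K))) := by
    rw [← hiInterK]
    exact tendsto_measure_iInter_atTop
      (fun m => ((hAseqc m).add hKc).isClosed.measurableSet.nullMeasurableSet)
      (fun m m' h => add_subset_add_right (hanti h))
      ⟨0, (((hAseqc 0).add hKc).measure_lt_top).ne⟩
  have ht1' : Filter.Tendsto (fun m => (volume (Aseq m)).toReal) Filter.atTop
      (𝓝 ((volume A).toReal)) :=
    (ENNReal.tendsto_toReal (hAc.measure_lt_top.ne)).comp ht1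
  have ht2' : Filter.Tendsto (fun m => (volume (Aseq m + K)).toReal) Filter.atTop
      (𝓝 ((volume (A + K)).toReal)) :=
    (ENNReal.tendsto_toReal ((hAc.add hKc).measure_lt_top.ne)).comp ht2
  exact le_of_tendsto (ht2'.sub ht1') (Filter.Eventually.of_forall hcut)


/-! ### The one-sided derivative at `0` of `t ↦ |C + tK|` -/

lemma smul_set_mono_scalar {K : Set (Eu n)} (hK : Convex ℝ K) (h0 : (0 : Eu n) ∈ K)
    {t s : ℝ} (ht : 0 ≤ t) (hts : t ≤ s) : t • K ⊆ s • K := by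
  rcases eq_or_lt_of_le (ht.trans hts) with hs | hs
  · have : t = 0 := le_antisymm (hts.trans hs.symm.le) ht
    subst this
    rw [← hs]
  · rintro _ ⟨y, hy, rfl⟩
    refine ⟨(t / s) • y + (1 - t / s) • 0, ?_, ?_⟩
    · refine hK hy h0 (by positivity) ?_ (by ring)
      have : t / s ≤ 1 := (div_le_one hs).2 hts
      linarith
    · simp only [smul_zero, add_zero, smul_smul]
      rw [mul_div_cancel₀ _ hs.ne']

/-- The volume gap function. -/
def Fg (C K : Set (Eu n)) (t : ℝ) : ℝ := (volume (C + t • K)).toReal - (volume C).toReal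

/-- The candidate derivative: infimum of the slopes. -/
def iota (C K : Set (Eu n)) : ℝ := sInf ((fun t => Fg C K t / t) '' Ioi 0)

lemma zero_mem_smul_aux {K : Set (Eu n)} (h0K : (0 : Eu n) ∈ K) (t : ℝ) :
    (0 : Eu n) ∈ t • K := ⟨0, h0K, smul_zero t⟩

lemma add_zero_smul {C K : Set (Eu n)} (h0K : (0 : Eu n) ∈ K) :
    C + (0 : ℝ) • K = C := by
  rw [zero_smul_set ⟨0, h0K⟩]
  ext x
  constructor
  · rintro ⟨a, ha, b, hb, rfl⟩
    rw [Set.mem_zero] at hb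
    subst hb
    show a + 0 ∈ C
    rwa [add_zero]
  · intro hx
    exact ⟨x, hx, 0, Set.mem_zero.2 rfl, add_zero x⟩

lemma Fg_zero {C K : Set (Eu n)} (h0K : (0 : Eu n) ∈ K) : Fg C K 0 = 0 := by
  rw [Fg, add_zero_smul h0K, sub_self]

lemma Fg_nonneg {C K : Set (Eu n)} (hCc : IsCompact C) (hKc : IsCompact K)
    (h0K : (0 : Eu n) ∈ K) (t : ℝ) : 0 ≤ Fg C K t := by
  have hsub : C ⊆ C + t • K := subset_add_right (zero_mem_smul_aux h0K t)
  have h1 := ENNReal.toReal_mono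
    ((hCc.add (hKc.smul t)).measure_lt_top (μ := (volume : Measure (Eu n)))).ne
    (measure_mono (μ := (volume : Measure (Eu n))) hsub)
  rw [Fg]
  linarith

lemma Fg_mono {C K : Set (Eu n)} (hCc : IsCompact C) (hKc : IsCompact K)
    (hKconv : Convex ℝ K) (h0K : (0 : Eu n) ∈ K) {t s : ℝ} (ht : 0 ≤ t) (hts : t ≤ s) :
    Fg C K t ≤ Fg C K s := by
  have hsub : C + t • K ⊆ C + s • K :=
    add_subset_add_left (smul_set_mono_scalar hKconv h0K ht hts)
  have h1 := ENNReal.toReal_mono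
    ((hCc.add (hKc.smul s)).measure_lt_top (μ := (volume : Measure (Eu n)))).ne
    (measure_mono (μ := (volume : Measure (Eu n))) hsub)
  rw [Fg, Fg]
  linarith

lemma Fg_superadd {C K : Set (Eu n)} (hCc : IsCompact C) (hCconv : Convex ℝ C)
    (hKc : IsCompact K) (hKconv : Convex ℝ K) (h0K : (0 : Eu n) ∈ K)
    {t h : ℝ} (ht : 0 ≤ t) (hh : 0 ≤ h) :
    Fg C K t + Fg C K h ≤ Fg C K (t + h) := by
  have hg := gap_mono (A := C) (B := C + t • K) (K := h • K) hCc hCconv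
    (hCc.add (hKc.smul t)) (hCconv.add (hKconv.smul t)) (hKc.smul h)
    (zero_mem_smul_aux h0K h)
    (subset_add_right (zero_mem_smul_aux h0K t))
  have heq : C + t • K + h • K = C + (t + h) • K := by
    rw [hKconv.add_smul ht hh, add_assoc]
  rw [heq] at hg
  simp only [Fg] at *
  linarith

lemma Fg_nsmul {C K : Set (Eu n)} (hCc : IsCompact C) (hCconv : Convex ℝ C)
    (hKc : IsCompact K) (hKconv : Convex ℝ K) (h0K : (0 : Eu n) ∈ K)
    (m : ℕ) {t : ℝ} (ht : 0 ≤ t) : (m : ℝ) * Fg C K t ≤ Fg C K ((m : ℝ) * t) := by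
  induction m with
  | zero => simp [Fg_zero h0K]
  | succ m ih =>
    have h1 := Fg_superadd hCc hCconv hKc hKconv h0K
      (t := (m : ℝ) * t) (h := t) (by positivity) ht
    push_cast
    have h2 : ((m : ℝ) + 1) * t = (m : ℝ) * t + t := by ring
    rw [h2]
    have hFt := Fg_nonneg hCc hKc h0K (C := C) t
    nlinarith

lemma Fg_slope_bound {C K : Set (Eu n)} (hCc : IsCompact C) (hCconv : Convex ℝ C)
    (hKc : IsCompact K) (hKconv : Convex ℝ K) (h0K : (0 : Eu n) ∈ K)
    {t s : ℝ} (ht : 0 < t) (hts : t < s) :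
    Fg C K t / t ≤ Fg C K s / (s - t) := by
  have hs : 0 < s := ht.trans hts
  set m := Nat.floor (s / t) with hm
  have hm1 : 1 ≤ m := by
    rw [hm, Nat.le_floor_iff (by positivity)]
    rw [le_div_iff₀ ht]
    push_cast
    linarith
  have hmt : (m : ℝ) * t ≤ s := by
    have h1 := Nat.floor_le (by positivity : (0:ℝ) ≤ s / t)
    rw [← hm] at h1
    calc (m : ℝ) * t ≤ (s / t) * t := by nlinarith
      _ = s := by field_simp
  have hmt2 : s - t < (m : ℝ) * t := by
    have h1 := Nat.lt_floor_add_one (s / t)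
    rw [← hm] at h1
    have h2 : s / t * t < ((m : ℝ) + 1) * t := by nlinarith
    have h3 : s / t * t = s := by field_simp
    nlinarith
  have hkey : (m : ℝ) * Fg C K t ≤ Fg C K s := by
    calc (m : ℝ) * Fg C K t ≤ Fg C K ((m : ℝ) * t) :=
          Fg_nsmul hCc hCconv hKc hKconv h0K m ht.le
      _ ≤ Fg C K s := Fg_mono hCc hKc hKconv h0K (by positivity) hmt
  have hFt := Fg_nonneg hCc hKc h0K (C := C) t
  have hFs := Fg_nonneg hCc hKc h0K (C := C) s
  rw [div_le_div_iff₀ ht (by linarith)]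
  have hmc : (1 : ℝ) ≤ (m : ℝ) := by exact_mod_cast hm1
  nlinarith

lemma iota_le_slope {C K : Set (Eu n)} (hCc : IsCompact C) (hKc : IsCompact K)
    (h0K : (0 : Eu n) ∈ K) {s : ℝ} (hs : 0 < s) : iota C K ≤ Fg C K s / s := by
  refine csInf_le ⟨0, ?_⟩ ⟨s, hs, rfl⟩
  rintro q ⟨u, hu, rfl⟩
  have hu' : (0:ℝ) < u := hu
  have hF := Fg_nonneg hCc hKc h0K (C := C) u
  positivity

lemma iota_nonneg {C K : Set (Eu n)} (hCc : IsCompact C) (hKc : IsCompact K)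
    (h0K : (0 : Eu n) ∈ K) : 0 ≤ iota C K := by
  refine le_csInf ⟨Fg C K 1 / 1, ⟨1, by norm_num, rfl⟩⟩ ?_
  rintro q ⟨u, hu, rfl⟩
  have hu' : (0:ℝ) < u := hu
  have hF := Fg_nonneg hCc hKc h0K (C := C) u
  positivity

lemma hasDeriv_vol_add {C K : Set (Eu n)} (hCc : IsCompact C) (hCconv : Convex ℝ C)
    (hKc : IsCompact K) (hKconv : Convex ℝ K) (h0K : (0 : Eu n) ∈ K) :
    HasDerivWithinAt (fun t : ℝ => (volume (C + t • K)).toReal)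
      (iota C K) (Ici (0:ℝ)) 0 := by
  rw [hasDerivWithinAt_iff_tendsto_slope]
  have hset : Ici (0:ℝ) \ {0} = Ioi 0 := by
    ext x
    simp only [mem_diff, mem_Ici, mem_singleton_iff, mem_Ioi]
    constructor
    · rintro ⟨h1, h2⟩; exact lt_of_le_of_ne h1 (Ne.symm h2)
    · intro h; exact ⟨h.le, h.ne'⟩
  rw [hset]
  have hslope : ∀ t ∈ Ioi (0:ℝ),
      Fg C K t / t = slope (fun t : ℝ => (volume (C + t • K)).toReal) 0 t := by
    intro t _
    rw [slope_def_field, add_zero_smul h0K, sub_zero, Fg]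
  have htend : Tendsto (fun t => Fg C K t / t) (𝓝[>] (0:ℝ)) (𝓝 (iota C K)) := by
    refine tendsto_order.2 ⟨?_, ?_⟩
    · intro a ha
      refine eventually_nhdsWithin_of_forall fun t ht => ?_
      exact lt_of_lt_of_le ha (iota_le_slope hCc hKc h0K ht)
    · intro b hb
      obtain ⟨q, ⟨s, hs, rfl⟩, hqb⟩ := exists_lt_of_csInf_lt
        (⟨Fg C K 1 / 1, ⟨1, by norm_num, rfl⟩⟩ :
          ((fun t => Fg C K t / t) '' Ioi 0).Nonempty) hb
      have hs' : (0:ℝ) < s := hs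
      have hb0 : (0:ℝ) < b := lt_of_le_of_lt (iota_nonneg hCc hKc h0K) hb
      have hFs := Fg_nonneg hCc hKc h0K (C := C) s
      have hq0 : 0 ≤ Fg C K s / s := by positivity
      set δ := s * (b - Fg C K s / s) / b with hδ
      have hδpos : 0 < δ := by
        have : 0 < b - Fg C K s / s := by linarith
        positivity
      have hδs : δ ≤ s := by
        rw [hδ, div_le_iff₀ hb0]
        have : s * (b - Fg C K s / s) ≤ s * b := by nlinarith
        linarith
      have hIoo : Ioo (0:ℝ) δ ∈ 𝓝[>] (0:ℝ) := Ioo_mem_nhdsGT_of_mem ⟨le_refl 0, hδpos⟩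
      refine Filter.mem_of_superset hIoo ?_
      rintro t ⟨ht0, htδ⟩
      have hts : t < s := lt_of_lt_of_le htδ hδs
      have h1 : Fg C K t / t ≤ Fg C K s / (s - t) :=
        Fg_slope_bound hCc hCconv hKc hKconv h0K ht0 hts
      have h2 : Fg C K s / (s - t) < b := by
        rw [div_lt_iff₀ (by linarith)]
        have h3 : Fg C K s = (Fg C K s / s) * s := by field_simp
        have h4 : t * b < δ * b := by nlinarith
        have h5 : δ * b = s * (b - Fg C K s / s) := by
          rw [hδ]; field_simp
        nlinarith
      show Fg C K t / t < b
      linarith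
  exact Tendsto.congr' (eventually_nhdsWithin_of_forall hslope) htend

lemma aniPer_eq_iota {C K : Set (Eu n)} (hCc : IsCompact C) (hCconv : Convex ℝ C)
    (hKc : IsCompact K) (hKconv : Convex ℝ K) (h0K : (0 : Eu n) ∈ K) :
    aniPer C K = iota C K :=
  (hasDeriv_vol_add hCc hCconv hKc hKconv h0K).derivWithin (uniqueDiffOn_Ici 0 0 self_mem_Ici)

lemma aniPer_nonneg {C K : Set (Eu n)} (hCc : IsCompact C) (hCconv : Convex ℝ C)
    (hKc : IsCompact K) (hKconv : Convex ℝ K) (h0K : (0 : Eu n) ∈ K) :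
    0 ≤ aniPer C K := by
  rcases C.eq_empty_or_nonempty with rfl | hCne
  · have hfun : (fun t : ℝ => (volume ((∅ : Set (Eu n)) + t • K)).toReal) = fun _ => 0 := by
      funext t
      rw [Set.empty_add]
      simp
    unfold aniPer
    rw [hfun]
    simp
  · rw [aniPer_eq_iota hCc hCconv hKc hKconv h0K]
    exact iota_nonneg hCc hKc h0K


/-! ### Properties of the inner parallel body and the relative inradius -/

lemma innerPar_convex {Ω K : Set (Eu n)} (hΩconv : Convex ℝ Ω) (l : ℝ) :
    Convex ℝ (innerPar Ω K l) := by
  intro x₁ hx₁ x₂ hx₂ a b ha hb hab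
  intro y hy
  have h1 := hx₁ y hy
  have h2 := hx₂ y hy
  have hly : l • y = (a + b) • (l • y) := by rw [hab, one_smul]
  have key : (a • x₁ + b • x₂) + l • y = a • (x₁ + l • y) + b • (x₂ + l • y) := by
    calc (a • x₁ + b • x₂) + l • y = a • x₁ + b • x₂ + (a + b) • (l • y) := by rw [← hly]
      _ = a • (x₁ + l • y) + b • (x₂ + l • y) := by module
  rw [key]
  exact hΩconv h1 h2 ha hb hab

lemma innerPar_isClosed {Ω K : Set (Eu n)} (hΩ : IsClosed Ω) (l : ℝ) :
    IsClosed (innerPar Ω K l) := by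
  have heq : innerPar Ω K l = ⋂ y ∈ K, (fun x => x + l • y) ⁻¹' Ω := by
    ext x
    simp [innerPar]
  rw [heq]
  exact isClosed_biInter fun y _ => hΩ.preimage (continuous_id.add continuous_const)

lemma innerPar_subset {Ω K : Set (Eu n)} (h0K : (0 : Eu n) ∈ K) (l : ℝ) :
    innerPar Ω K l ⊆ Ω := by
  intro x hx
  have := hx 0 h0K
  simpa using this

/-! ### The main theorem, assuming `0 ∈ K` -/

theorem master {n : ℕ} (hn : 2 ≤ n) (Ω K : Set (EuclideanSpace ℝ (Fin n)))
    (hΩc : IsCompact Ω) (hΩconv : Convex ℝ Ω) (hΩint : (interior Ω).Nonempty)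
    (hKc : IsCompact K) (hKconv : Convex ℝ K) (hKvol : 0 < volume K)
    (h0K : (0 : EuclideanSpace ℝ (Fin n)) ∈ K) (l : ℝ) (hl : 0 ≤ l) :
    (max (1 - l / inrad Ω K) 0) ^ (n - 1) * aniPer Ω K
      ≤ aniPer (innerPar Ω K l) K := by
  have hΩne : Ω.Nonempty := hΩint.mono interior_subset
  set S := {l' : ℝ | 0 ≤ l' ∧ ∃ x, ∀ y ∈ K, x + l' • y ∈ Ω} with hSdef
  have hS0 : (0:ℝ) ∈ S := by
    obtain ⟨x0, hx0⟩ := hΩne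
    exact ⟨le_refl 0, x0, fun y _ => by simpa using hx0⟩
  have hKfin : volume K ≠ ⊤ := (hKc.measure_lt_top (μ := (volume : Measure (Eu n)))).ne
  have hΩfin : volume Ω ≠ ⊤ := (hΩc.measure_lt_top (μ := (volume : Measure (Eu n)))).ne
  have hKpos : 0 < (volume K).toReal := ENNReal.toReal_pos hKvol.ne' hKfin
  set bb := max 1 ((volume Ω).toReal / (volume K).toReal) with hbbdef
  have hbound : ∀ l' ∈ S, l' ≤ bb := by
    rintro l' ⟨hl'0, x, hx⟩
    have hsub : x +ᵥ (l' • K) ⊆ Ω := by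
      rintro _ ⟨z, ⟨y, hy, rfl⟩, rfl⟩
      exact hx y hy
    have hv : ENNReal.ofReal (l' ^ n) * volume K ≤ volume Ω := by
      calc ENNReal.ofReal (l' ^ n) * volume K = volume (l' • K) := by
            rw [Measure.addHaar_smul_of_nonneg volume hl'0, finrank_euclideanSpace_fin]
        _ = volume (x +ᵥ l' • K) := (vol_vadd _ _).symm
        _ ≤ volume Ω := measure_mono hsub
    have h2 : l' ^ n * (volume K).toReal ≤ (volume Ω).toReal := by
      have h3 := ENNReal.toReal_mono hΩfin hv
      rwa [ENNReal.toReal_mul, ENNReal.toReal_ofReal (pow_nonneg hl'0 n)] at h3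
    by_cases h1 : l' ≤ 1
    · exact h1.trans (le_max_left _ _)
    · push_neg at h1
      refine le_trans ?_ (le_max_right _ _)
      have h4 : l' ≤ l' ^ n := le_self_pow₀ h1.le (by omega)
      rw [le_div_iff₀ hKpos]
      nlinarith
  have hbdd : BddAbove S := ⟨bb, fun l' hl' => hbound l' hl'⟩
  have hSeq : S = Prod.fst ''
      ((Icc (0:ℝ) bb ×ˢ Ω) ∩ ⋂ y ∈ K, {p : ℝ × Eu n | p.2 + p.1 • y ∈ Ω}) := by
    ext l'
    constructor
    · rintro ⟨h0, x, hx⟩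
      refine ⟨(l', x), ⟨⟨⟨h0, hbound l' ⟨h0, x, hx⟩⟩, ?_⟩, mem_iInter₂.2 fun y hy => hx y hy⟩, rfl⟩
      have := hx 0 h0K
      simpa using this
    · rintro ⟨⟨l'', x⟩, ⟨⟨⟨h0, _⟩, _⟩, hall⟩, rfl⟩
      exact ⟨h0, x, fun y hy => mem_iInter₂.1 hall y hy⟩
  have hScomp : IsCompact S := by
    rw [hSeq]
    refine IsCompact.image ?_ continuous_fst
    refine (isCompact_Icc.prod hΩc).inter_right ?_
    exact isClosed_biInter fun y _ =>
      hΩc.isClosed.preimage (continuous_snd.add (continuous_fst.smul continuous_const))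
  have hrS : inrad Ω K ∈ S := by
    have : inrad Ω K = sSup S := rfl
    rw [this]
    exact hScomp.sSup_mem ⟨0, hS0⟩
  obtain ⟨hr0, x₀, hx₀⟩ := hrS
  set r := inrad Ω K with hrdef
  have hrpos : 0 < r := by
    obtain ⟨z, hz⟩ := hΩint
    obtain ⟨ε, hε, hball⟩ := Metric.isOpen_iff.1 isOpen_interior z hz
    obtain ⟨R, hR⟩ := hKc.isBounded.subset_closedBall 0
    set R' := max R 1 with hR'def
    have hR'pos : (0:ℝ) < R' := lt_of_lt_of_le one_pos (le_max_right _ _)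
    have hR' : K ⊆ Metric.closedBall 0 R' :=
      hR.trans (Metric.closedBall_subset_closedBall (le_max_left _ _))
    have hmem : ε / (2 * R') ∈ S := by
      refine ⟨by positivity, z, fun y hy => ?_⟩
      refine interior_subset (hball ?_)
      rw [Metric.mem_ball, dist_eq_norm, add_sub_cancel_left, norm_smul, Real.norm_eq_abs]
      have hyR : ‖y‖ ≤ R' := by
        have := hR' hy
        rwa [Metric.mem_closedBall, dist_zero_right] at this
      have h5 : |ε / (2 * R')| = ε / (2 * R') := abs_of_nonneg (by positivity)
      rw [h5]
      calc ε / (2 * R') * ‖y‖ ≤ ε / (2 * R') * R' := by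
            apply mul_le_mul_of_nonneg_left hyR (by positivity)
        _ = ε / 2 := by field_simp
        _ < ε := by linarith
    calc (0:ℝ) < ε / (2 * R') := by positivity
      _ ≤ r := le_csSup hbdd hmem
  set P := innerPar Ω K l with hPdef
  have hPsub : P ⊆ Ω := innerPar_subset h0K l
  have hPc : IsCompact P := IsCompact.of_isClosed_subset hΩc (innerPar_isClosed hΩc.isClosed l) hPsub
  have hPconv : Convex ℝ P := innerPar_convex hΩconv l
  by_cases hlr : r ≤ l
  · -- trivial case: the factor is zero
    have hmax0 : max (1 - l / r) 0 = 0 := by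
      apply max_eq_right
      have h1 : 1 ≤ l / r := (one_le_div hrpos).2 hlr
      linarith
    rw [hmax0, zero_pow (by omega : n - 1 ≠ 0), zero_mul]
    exact aniPer_nonneg hPc hPconv hKc hKconv h0K
  · push_neg at hlr
    set c := 1 - l / r with hcdef
    have hc : 0 < c := by
      have : l / r < 1 := (div_lt_one hrpos).2 hlr
      simp only [hcdef]
      linarith
    have hlrle : 0 ≤ l / r := by positivity
    have hcl : c + l / r = 1 := by simp [hcdef]
    have hmax : max (1 - l / r) 0 = c := max_eq_left hc.le
    set v := (l / r) • x₀ with hvdef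
    set D := c • Ω + ({v} : Set (Eu n)) with hDdef
    have hDP : D ⊆ P := by
      rintro _ ⟨_, ⟨ω, hω, rfl⟩, b, hb, rfl⟩
      rw [mem_singleton_iff] at hb
      subst hb
      intro y hy
      have key : (c • ω + v) + l • y = c • ω + (l / r) • (x₀ + r • y) := by
        rw [smul_add, smul_smul, div_mul_cancel₀ l hrpos.ne']
        rw [hvdef, add_assoc]
      rw [key]
      exact hΩconv hω (hx₀ y hy) hc.le hlrle hcl
    have hDc : IsCompact D := (hΩc.smul c).add isCompact_singleton
    have hDconv : Convex ℝ D := (hΩconv.smul c).add (convex_singleton v)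
    have hDne : D.Nonempty := by
      obtain ⟨ω, hω⟩ := hΩne
      exact ⟨c • ω + v, add_mem_add ⟨ω, hω, rfl⟩ rfl⟩
    have hPne : P.Nonempty := hDne.mono hDP
    -- volume scaling for D
    have hDvol : ∀ s : ℝ, 0 ≤ s → volume (D + s • K)
        = ENNReal.ofReal (c ^ n) * volume (Ω + (s / c) • K) := by
      intro s hs
      have h1 : D + s • K = c • (Ω + (s / c) • K) + ({v} : Set (Eu n)) := by
        rw [smul_set_add', smul_smul, mul_div_cancel₀ s hc.ne', hDdef]
        rw [add_right_comm]
      rw [h1, vol_add_singleton, Measure.addHaar_smul_of_nonneg volume hc.le,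
        finrank_euclideanSpace_fin]
    have hDvol0 : volume D = ENNReal.ofReal (c ^ n) * volume Ω := by
      rw [hDdef, vol_add_singleton, Measure.addHaar_smul_of_nonneg volume hc.le,
        finrank_euclideanSpace_fin]
    have hFgD : ∀ s : ℝ, 0 ≤ s → Fg D K s = c ^ n * Fg Ω K (s / c) := by
      intro s hs
      rw [Fg, Fg, hDvol s hs, hDvol0, ENNReal.toReal_mul, ENNReal.toReal_mul,
        ENNReal.toReal_ofReal (by positivity)]
      have hfin : volume (Ω + (s / c) • K) ≠ ⊤ :=
        ((hΩc.add (hKc.smul (s / c))).measure_lt_top (μ := (volume : Measure (Eu n)))).ne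
      ring
    rw [hmax, aniPer_eq_iota hΩc hΩconv hKc hKconv h0K,
      aniPer_eq_iota hPc hPconv hKc hKconv h0K]
    -- main estimate
    refine le_csInf ⟨Fg P K 1 / 1, ⟨1, by norm_num, rfl⟩⟩ ?_
    rintro q ⟨s, hs, rfl⟩
    have hs' : (0:ℝ) < s := hs
    have hiΩ : iota Ω K ≤ Fg Ω K (s / c) / (s / c) :=
      iota_le_slope hΩc hKc h0K (by positivity)
    have hgap := gap_mono (A := D) (B := P) (K := s • K) hDc hDconv hPc hPconv
      (hKc.smul s) (zero_mem_smul_aux h0K s) hDP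
    have hFgDP : Fg D K s ≤ Fg P K s := by
      simp only [Fg]
      linarith
    have hn0 : 0 < n := by omega
    have hn1 : n - 1 + 1 = n := Nat.succ_pred_eq_of_pos hn0
    have hcpow : c ^ (n - 1) * c = c ^ n := by
      rw [← pow_succ, hn1]
    have hFgΩ : 0 ≤ Fg Ω K (s / c) := Fg_nonneg hΩc hKc h0K _
    calc c ^ (n - 1) * iota Ω K ≤ c ^ (n - 1) * (Fg Ω K (s / c) / (s / c)) := by
          apply mul_le_mul_of_nonneg_left hiΩ (by positivity)
      _ = (c ^ n * Fg Ω K (s / c)) / s := by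
          rw [← hcpow]
          field_simp
      _ = Fg D K s / s := by rw [hFgD s hs'.le]
      _ ≤ Fg P K s / s := by gcongr
      _ = (fun t => Fg P K t / t) s := rfl


/-! ### Translation invariance reductions -/

lemma add_smul_vadd_eq (C K : Set (Eu n)) (w : Eu n) (t : ℝ) :
    C + t • (w +ᵥ K) = (t • w) +ᵥ (C + t • K) := by
  ext x
  constructor
  · rintro ⟨a, ha, _, ⟨_, ⟨y, hy, rfl⟩, rfl⟩, rfl⟩
    refine ⟨a + t • y, ⟨a, ha, t • y, ⟨y, hy, rfl⟩, rfl⟩, ?_⟩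
    show t • w + (a + t • y) = a + t • (w +ᵥ y)
    rw [vadd_eq_add, smul_add]
    abel
  · rintro ⟨_, ⟨a, ha, _, ⟨y, hy, rfl⟩, rfl⟩, rfl⟩
    refine ⟨a, ha, t • (w + y), ⟨w + y, ⟨y, hy, rfl⟩, rfl⟩, ?_⟩
    show a + t • (w + y) = t • w +ᵥ (a + t • y)
    rw [vadd_eq_add, smul_add]
    abel

lemma vadd_add_eq (C K : Set (Eu n)) (w : Eu n) (t : ℝ) :
    (w +ᵥ C) + t • K = w +ᵥ (C + t • K) := by
  ext x
  constructor
  · rintro ⟨_, ⟨a, ha, rfl⟩, b, hb, rfl⟩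
    refine ⟨a + b, ⟨a, ha, b, hb, rfl⟩, ?_⟩
    show w + (a + b) = (w +ᵥ a) + b
    rw [vadd_eq_add]
    abel
  · rintro ⟨_, ⟨a, ha, b, hb, rfl⟩, rfl⟩
    refine ⟨w + a, ⟨a, ha, rfl⟩, b, hb, ?_⟩
    show (w + a) + b = w +ᵥ (a + b)
    rw [vadd_eq_add]
    abel

lemma aniPer_K_vadd (C K : Set (Eu n)) (w : Eu n) : aniPer C (w +ᵥ K) = aniPer C K := by
  unfold aniPer
  congr 1
  funext t
  rw [add_smul_vadd_eq, vol_vadd]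

lemma aniPer_C_vadd (C K : Set (Eu n)) (w : Eu n) : aniPer (w +ᵥ C) K = aniPer C K := by
  unfold aniPer
  congr 1
  funext t
  rw [vadd_add_eq, vol_vadd]

lemma inrad_K_vadd (Ω K : Set (Eu n)) (w : Eu n) : inrad Ω (w +ᵥ K) = inrad Ω K := by
  unfold inrad
  congr 1
  ext l'
  simp only [mem_setOf_eq]
  constructor
  · rintro ⟨h0, x, hx⟩
    refine ⟨h0, x + l' • w, fun y hy => ?_⟩
    have h1 := hx (w + y) ⟨y, hy, rfl⟩
    have e : (x + l' • w) + l' • y = x + l' • (w + y) := by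
      rw [smul_add]; abel
    rw [e]
    exact h1
  · rintro ⟨h0, x, hx⟩
    refine ⟨h0, x + -(l' • w), fun yy hyy => ?_⟩
    obtain ⟨y, hy, rfl⟩ := hyy
    have h1 := hx y hy
    have e : (x + -(l' • w)) + l' • (w +ᵥ y) = x + l' • y := by
      rw [vadd_eq_add, smul_add]; abel
    rw [e]
    exact h1

lemma innerPar_K_vadd (Ω K : Set (Eu n)) (w : Eu n) (l : ℝ) :
    innerPar Ω (w +ᵥ K) l = (-(l • w)) +ᵥ innerPar Ω K l := by
  ext x
  constructor
  · intro hx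
    refine ⟨x + l • w, fun y hy => ?_, show -(l • w) + (x + l • w) = x by abel⟩
    have h1 := hx (w + y) ⟨y, hy, rfl⟩
    have e : (x + l • w) + l • y = x + l • (w + y) := by
      rw [smul_add]; abel
    rw [e]
    exact h1
  · rintro ⟨p, hp, rfl⟩
    rintro _ ⟨y, hy, rfl⟩
    have h1 := hp y hy
    have e : (-(l • w) +ᵥ p) + l • (w +ᵥ y) = p + l • y := by
      rw [vadd_eq_add, vadd_eq_add, smul_add]; abel
    rw [e]
    exact h1

end LarsonAux

open LarsonAux in
/-- anisotropic Larson inequality: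
`Per_K(Ω ∼ λK) ≥ (1 - λ/r)₊^{n-1} · Per_K(Ω)` for all `λ ≥ 0`. -/
theorem stmt12 {n : ℕ} (hn : 2 ≤ n) (Ω K : Set (EuclideanSpace ℝ (Fin n)))
    (hΩc : IsCompact Ω) (hΩconv : Convex ℝ Ω) (hΩint : (interior Ω).Nonempty)
    (hKc : IsCompact K) (hKconv : Convex ℝ K) (hKint : (interior K).Nonempty)
    (l : ℝ) (hl : 0 ≤ l) :
    (max (1 - l / inrad Ω K) 0) ^ (n - 1) * aniPer Ω K
      ≤ aniPer (innerPar Ω K l) K := by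
  obtain ⟨y₀, hy₀⟩ : K.Nonempty := hKint.mono interior_subset
  set w : EuclideanSpace ℝ (Fin n) := -y₀ with hwdef
  set K' := w +ᵥ K with hK'def
  have hK'c : IsCompact K' := by
    have : K' = (fun y => w + y) '' K := rfl
    rw [this]
    exact hKc.image (continuous_const.add continuous_id)
  have hK'conv : Convex ℝ K' := hKconv.vadd w
  have h0K' : (0 : EuclideanSpace ℝ (Fin n)) ∈ K' := ⟨y₀, hy₀, by simp [hwdef]⟩
  have hK'vol : 0 < volume K' := by
    rw [hK'def, vol_vadd]
    exact Measure.measure_pos_of_nonempty_interior _ hKint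
  have hmain := master hn Ω K' hΩc hΩconv hΩint hK'c hK'conv hK'vol h0K' l hl
  rw [hK'def, inrad_K_vadd Ω K w, aniPer_K_vadd Ω K w, innerPar_K_vadd Ω K w l,
    aniPer_K_vadd _ K w, aniPer_C_vadd _ K _] at hmain
  exact hmain
end
end

section
/- Let Ω, K ⊂ ℝⁿ be convex bodies with nonempty interior, r = r(Ω,K), and suppose that for some λ* ∈ [0, r) the volume satisfies V_n(Ω ∼ λK) = ((r−λ)/(r−λ*))ⁿ · V_n(Ω ∼ λ*K) for all λ ∈ [λ*, r]. Then for every λ ∈ [λ*, r), the inner parallel body Ω ∼ λK is homothetic to Ω ∼ λ*K; more precisely, after a suitable translation, Ω ∼ λK = ((r−λ)/(r−λ*))·(Ω ∼ λ*K). -/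
open Pointwise MeasureTheory Set

noncomputable section

variable {n : ℕ} {Ω K : Set (EuclideanSpace ℝ (Fin n))}

lemma innerPar_convex (hΩ : Convex ℝ Ω) (l : ℝ) : Convex ℝ (innerPar Ω K l) := by
  intro x hx y hy a b ha hb hab z hz
  have h : a • x + b • y + l • z = a • (x + l • z) + b • (y + l • z) := by
    have : a • (x + l • z) + b • (y + l • z)
        = a • x + b • y + (a + b) • (l • z) := by module
    rw [this, hab, one_smul]
  rw [h]
  exact hΩ (hx z hz) (hy z hz) ha hb hab

lemma innerPar_isClosed (hΩ : IsClosed Ω) (l : ℝ) : IsClosed (innerPar Ω K l) := by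
  have : innerPar Ω K l = ⋂ y ∈ K, (fun x => x + l • y) ⁻¹' Ω := by
    ext x; simp [innerPar]
  rw [this]
  exact isClosed_biInter fun y hy => hΩ.preimage (continuous_id.add continuous_const)

lemma innerPar_isCompact (hΩ : IsCompact Ω) {y₀ : EuclideanSpace ℝ (Fin n)} (hy₀ : y₀ ∈ K)
    (l : ℝ) : IsCompact (innerPar Ω K l) := by
  have hsub : innerPar Ω K l ⊆ (fun z => z + (-(l • y₀))) '' Ω := by
    intro x hx
    exact ⟨x + l • y₀, hx y₀ hy₀, by module⟩
  exact (hΩ.image (continuous_id.add continuous_const)).of_isClosed_subset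
    (innerPar_isClosed hΩ.isClosed l) hsub

/-- shifting a witness down -/
lemma innerPar_shift (hK : Convex ℝ K) {y₀ : EuclideanSpace ℝ (Fin n)} (hy₀ : y₀ ∈ K)
    {a b : ℝ} (ha : 0 ≤ a) (hab : a ≤ b) {x : EuclideanSpace ℝ (Fin n)}
    (hx : x ∈ innerPar Ω K b) : x + (b - a) • y₀ ∈ innerPar Ω K a := by
  rcases eq_or_lt_of_le (ha.trans hab) with hb0 | hb0
  · have ha0 : a = 0 := le_antisymm (hab.trans hb0.symm.le) ha
    have hb0' : b = 0 := hb0.symm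
    intro y hy
    simpa [ha0, hb0'] using hx y hy
  · intro y hy
    have hmemK : ((b - a) / b) • y₀ + (a / b) • y ∈ K := by
      apply hK hy₀ hy (by apply div_nonneg <;> linarith) (by apply div_nonneg <;> linarith)
      field_simp
      ring
    have hmem := hx _ hmemK
    have heq : x + b • (((b - a) / b) • y₀ + (a / b) • y) = x + (b - a) • y₀ + a • y := by
      rw [smul_add, smul_smul, smul_smul]
      rw [mul_div_cancel₀ _ hb0.ne', mul_div_cancel₀ _ hb0.ne']
      abel
    rwa [heq] at hmem

lemma innerPar_nonempty (hΩne : Ω.Nonempty) (hK : Convex ℝ K)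
    {y₀ : EuclideanSpace ℝ (Fin n)} (hy₀ : y₀ ∈ K) {l : ℝ}
    (hl0 : 0 ≤ l) (hl : l < inrad Ω K) : (innerPar Ω K l).Nonempty := by
  obtain ⟨x, hxΩ⟩ := hΩne
  have hSne : {l : ℝ | 0 ≤ l ∧ ∃ x, ∀ y ∈ K, x + l • y ∈ Ω}.Nonempty :=
    ⟨0, le_refl 0, x, fun y hy => by simpa using hxΩ⟩
  obtain ⟨b, ⟨hb0, xb, hxb⟩, hlb⟩ := exists_lt_of_lt_csSup hSne hl
  exact ⟨xb + (b - l) • y₀, innerPar_shift hK hy₀ hl0 hlb.le hxb⟩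

/-- The inradius is attained. -/
lemma exists_inrad_witness (hΩc : IsCompact Ω) (hΩne : Ω.Nonempty) (hK : Convex ℝ K)
    {y₀ : EuclideanSpace ℝ (Fin n)} (hy₀ : y₀ ∈ K) (hr : 0 < inrad Ω K) :
    (innerPar Ω K (inrad Ω K)).Nonempty := by
  set r := inrad Ω K with hrdef
  set lam : ℕ → ℝ := fun k => r - r / (k + 1) with hlam
  have hlam0 : ∀ k, 0 ≤ lam k := by
    intro k
    have h1 : r / (k + 1) ≤ r := by
      apply div_le_self hr.le
      have hk := Nat.cast_nonneg (α := ℝ) k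
      linarith
    simp only [hlam]; linarith
  have hlamlt : ∀ k, lam k < r := by
    intro k
    have : 0 < r / ((k:ℝ) + 1) := by positivity
    simp only [hlam]; linarith
  have hlammono : ∀ k, lam k ≤ lam (k + 1) := by
    intro k
    have hd : r / ((k:ℝ) + 1 + 1) ≤ r / ((k:ℝ) + 1) :=
      div_le_div_of_nonneg_left hr.le (by positivity) (by linarith)
    have he : ((k + 1 : ℕ) : ℝ) + 1 = (k:ℝ) + 1 + 1 := by push_cast; ring
    simp only [hlam, he]
    linarith
  set C : ℕ → Set (EuclideanSpace ℝ (Fin n)) := fun k => innerPar Ω K (lam k) with hC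
  set D : ℕ → Set (EuclideanSpace ℝ (Fin n)) :=
    fun k => (fun x => x + (lam k - r) • y₀) '' C k with hD
  have hCc : ∀ k, IsCompact (C k) := fun k => innerPar_isCompact hΩc hy₀ _
  have hDc : ∀ k, IsCompact (D k) := fun k => (hCc k).image (continuous_id.add continuous_const)
  have hDne : ∀ k, (D k).Nonempty := by
    intro k
    exact ((innerPar_nonempty hΩne hK hy₀ (hlam0 k) (hlamlt k))).image _
  have hDnest : ∀ k, D (k + 1) ⊆ D k := by
    intro k z hz
    obtain ⟨x, hx, rfl⟩ := hz
    refine ⟨x + (lam (k+1) - lam k) • y₀,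
      innerPar_shift hK hy₀ (hlam0 k) (hlammono k) hx, ?_⟩
    show x + (lam (k+1) - lam k) • y₀ + (lam k - r) • y₀
      = x + (lam (k+1) - r) • y₀
    rw [add_assoc, ← add_smul,
      show (lam (k+1) - lam k) + (lam k - r) = lam (k+1) - r from by ring]
  obtain ⟨z, hz⟩ := IsCompact.nonempty_iInter_of_sequence_nonempty_isCompact_isClosed
    D hDnest hDne (hDc 0) (fun k => (hDc k).isClosed)
  refine ⟨z, fun y hy => ?_⟩
  have hmem : ∀ k : ℕ, z + (r - lam k) • y₀ + lam k • y ∈ Ω := by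
    intro k
    have hzk : z ∈ D k := mem_iInter.1 hz k
    obtain ⟨x, hx, hxe⟩ := hzk
    have hxz : z + (r - lam k) • y₀ = x := by
      rw [← hxe]
      show x + (lam k - r) • y₀ + (r - lam k) • y₀ = x
      rw [add_assoc, ← add_smul,
        show (lam k - r) + (r - lam k) = 0 from by ring, zero_smul, add_zero]
    rw [hxz]
    exact hx y hy
  have htend : Filter.Tendsto (fun k : ℕ => z + (r - lam k) • y₀ + lam k • y)
      Filter.atTop (nhds (z + r • y)) := by
    have h1 : Filter.Tendsto (fun k : ℕ => r / ((k:ℝ) + 1)) Filter.atTop (nhds 0) := by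
      simpa [div_eq_mul_inv] using tendsto_const_nhds.mul (tendsto_one_div_add_atTop_nhds_zero_nat :
        Filter.Tendsto (fun k : ℕ => 1/((k:ℝ)+1)) Filter.atTop (nhds 0))
    have h2 : Filter.Tendsto lam Filter.atTop (nhds r) := by
      have := (tendsto_const_nhds (x := r) (f := Filter.atTop (α := ℕ))).sub h1
      simpa [hlam] using this
    have h3 : Filter.Tendsto (fun k : ℕ => (r - lam k)) Filter.atTop (nhds 0) := by
      have := (tendsto_const_nhds (x := r) (f := Filter.atTop (α := ℕ))).sub h2
      simpa using this
    have := ((tendsto_const_nhds (x := z) (f := Filter.atTop (α := ℕ))).add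
      (h3.smul_const y₀)).add (h2.smul_const y)
    simpa using this
  exact hΩc.isClosed.mem_of_tendsto htend (Filter.Eventually.of_forall hmem)

lemma convex_subset_of_interior_subset {B S : Set (EuclideanSpace ℝ (Fin n))}
    (hB : Convex ℝ B) (hS : IsClosed S) (hint : interior B ⊆ S)
    {w : EuclideanSpace ℝ (Fin n)} (hw : w ∈ interior B) : B ⊆ S := by
  intro b hb
  have hmem : ∀ k : ℕ, (1/((k:ℝ)+1)) • w + (1 - 1/((k:ℝ)+1)) • b ∈ S := by
    intro k
    apply hint
    apply hB.combo_interior_self_mem_interior hw hb (by positivity)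
    · have : 1/((k:ℝ)+1) ≤ 1 := by
        rw [div_le_one (by positivity)]
        have := Nat.cast_nonneg (α := ℝ) k
        linarith
      linarith
    · ring
  have htend : Filter.Tendsto (fun k : ℕ => (1/((k:ℝ)+1)) • w + (1 - 1/((k:ℝ)+1)) • b)
      Filter.atTop (nhds b) := by
    have h1 : Filter.Tendsto (fun k : ℕ => 1/((k:ℝ)+1)) Filter.atTop (nhds 0) :=
      tendsto_one_div_add_atTop_nhds_zero_nat
    have h2 := (tendsto_const_nhds (x := (1:ℝ)) (f := Filter.atTop (α := ℕ))).sub h1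
    have := (h1.smul_const w).add (h2.smul_const b)
    simpa using this
  exact hS.mem_of_tendsto htend (Filter.Eventually.of_forall hmem)



/-- if the volume of the inner parallel bodies decays exactly like
`((r-λ)/(r-λ*))ⁿ` on `[λ*, r]`, then each `Ω ∼ λK`, `λ ∈ [λ*, r)`, is a translate of
`((r-λ)/(r-λ*)) • (Ω ∼ λ*K)`. -/
theorem stmt14 {n : ℕ} (hn : 1 ≤ n) (Ω K : Set (EuclideanSpace ℝ (Fin n)))
    (hΩc : IsCompact Ω) (hΩconv : Convex ℝ Ω) (hΩint : (interior Ω).Nonempty)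
    (hKc : IsCompact K) (hKconv : Convex ℝ K) (hKint : (interior K).Nonempty)
    (lstar : ℝ) (hls : lstar ∈ Set.Ico 0 (inrad Ω K))
    (hvol : ∀ l ∈ Set.Icc lstar (inrad Ω K),
      (volume (innerPar Ω K l)).toReal =
        ((inrad Ω K - l) / (inrad Ω K - lstar)) ^ n *
          (volume (innerPar Ω K lstar)).toReal) :
    ∀ l ∈ Set.Ico lstar (inrad Ω K), ∃ x : EuclideanSpace ℝ (Fin n),
      innerPar Ω K l =
        x +ᵥ ((inrad Ω K - l) / (inrad Ω K - lstar)) • innerPar Ω K lstar := by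

  intro l hl
  obtain ⟨hls0, hlsr⟩ := hls
  obtain ⟨hll, hlr⟩ := hl
  set r := inrad Ω K with hrdef
  have hrpos : 0 < r := lt_of_le_of_lt hls0 hlsr
  obtain ⟨y₀, hy₀⟩ : K.Nonempty := hKint.mono interior_subset
  have hΩne : Ω.Nonempty := hΩint.mono interior_subset
  obtain ⟨x₀, hx₀⟩ := exists_inrad_witness hΩc hΩne hKconv hy₀ hrpos
  set c := (r - l) / (r - lstar) with hcdef
  set t := (l - lstar) / (r - lstar) with htdef
  have hrl : (0:ℝ) < r - lstar := by linarith
  have hc : 0 < c := div_pos (by linarith) hrl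
  have ht : 0 ≤ t := div_nonneg (by linarith) hrl.le
  have hct : c + t = 1 := by
    rw [hcdef, htdef, ← add_div, div_eq_one_iff_eq hrl.ne']
    ring
  set A := innerPar Ω K lstar with hAdef
  set B := innerPar Ω K l with hBdef
  set S := (t • x₀) +ᵥ c • A with hSdef
  -- S ⊆ B
  have hSB : S ⊆ B := by
    rintro p hp
    obtain ⟨q, hq, rfl⟩ := hp
    obtain ⟨a, ha, rfl⟩ := hq
    intro y hy
    have hsc : l = c * lstar + t * r := by
      rw [hcdef, htdef]
      field_simp
      ring
    have heq : t • x₀ + c • a + l • y = c • (a + lstar • y) + t • (x₀ + r • y) := by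
      rw [hsc]
      module
    show t • x₀ + c • a + l • y ∈ Ω
    rw [heq]
    exact hΩconv (ha y hy) (hx₀ y hy) hc.le ht hct
  -- interior A is nonempty
  have hAint : (interior A).Nonempty := by
    obtain ⟨z, hz⟩ := hKint
    have hopen : IsOpen (x₀ +ᵥ (r - lstar) • interior K) :=
      (isOpen_interior.smul₀ (by linarith : r - lstar ≠ 0)).vadd x₀
    have hsub : x₀ +ᵥ (r - lstar) • interior K ⊆ A := by
      rintro p hp
      obtain ⟨q, hq, rfl⟩ := hp
      obtain ⟨w, hw, rfl⟩ := hq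
      show x₀ + (r - lstar) • w ∈ innerPar Ω K lstar
      exact innerPar_shift hKconv (interior_subset hw) hls0 hlsr.le hx₀
    have hne : (x₀ +ᵥ (r - lstar) • interior K).Nonempty :=
      ⟨x₀ +ᵥ (r - lstar) • z, Set.vadd_mem_vadd_set (Set.smul_mem_smul_set hz)⟩
    exact hne.mono (interior_maximal hsub hopen)
  -- compactness facts
  have hAc : IsCompact A := innerPar_isCompact hΩc hy₀ _
  have hBc : IsCompact B := innerPar_isCompact hΩc hy₀ _
  have hSc : IsCompact S := (hAc.smul c).vadd _
  have hAfin : volume A ≠ ⊤ := hAc.measure_lt_top.ne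
  have hBfin : volume B ≠ ⊤ := hBc.measure_lt_top.ne
  have hSfin : volume S ≠ ⊤ := hSc.measure_lt_top.ne
  -- volumes
  have hvolS : volume S = ENNReal.ofReal (c ^ n) * volume A := by
    rw [hSdef, measure_vadd, Measure.addHaar_smul_of_nonneg volume hc.le,
      finrank_euclideanSpace_fin]
  have hvolSR : (volume S).toReal = c ^ n * (volume A).toReal := by
    rw [hvolS, ENNReal.toReal_mul, ENNReal.toReal_ofReal (by positivity)]
  have hvolBR : (volume B).toReal = c ^ n * (volume A).toReal :=
    hvol l ⟨hll, hlr.le⟩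
  have hSBvol : volume S = volume B :=
    (ENNReal.toReal_eq_toReal_iff' hSfin hBfin).1 (by rw [hvolSR, hvolBR])
  -- B \ S is null
  have hdiff : volume (B \ S) = 0 := by
    rw [measure_diff hSB hSc.measurableSet.nullMeasurableSet hSfin, hSBvol, tsub_self]
  -- interior B ⊆ S
  have hintBS : interior B ⊆ S := by
    intro x hx
    by_contra hxS
    have hU : IsOpen (interior B \ S) := isOpen_interior.sdiff hSc.isClosed
    have hpos : 0 < volume (interior B \ S) := hU.measure_pos volume ⟨x, hx, hxS⟩
    have hle : volume (interior B \ S) ≤ volume (B \ S) :=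
      measure_mono (diff_subset_diff_left interior_subset)
    rw [hdiff] at hle
    exact absurd (le_antisymm hle zero_le) hpos.ne'
  -- B ⊆ S, via a point in interior S ⊆ interior B
  obtain ⟨w, hw⟩ : (interior S).Nonempty := by
    rw [hSdef, interior_vadd, interior_smul₀ hc.ne']
    obtain ⟨a, ha⟩ := hAint
    exact ⟨t • x₀ +ᵥ c • a, Set.vadd_mem_vadd_set (Set.smul_mem_smul_set ha)⟩
  have hwB : w ∈ interior B := interior_mono hSB hw
  have hBS : B ⊆ S :=
    convex_subset_of_interior_subset (innerPar_convex hΩconv l) hSc.isClosed hintBS hwB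
  exact ⟨t • x₀, le_antisymm hBS hSB⟩
end
end

section
/- Let Ω, K ⊂ ℝⁿ be convex bodies with nonempty interior, r = r(Ω,K), λ* ∈ [0, r), and assume rK ⊆ Ω (after translation). Set Ω* := Ω ∼ λ*K. Then for every λ ∈ [λ*, r], ((r−λ)/(r−λ*))·Ω* ⊆ Ω ∼ λK. -/
open Pointwise MeasureTheory Set

noncomputable section

/-- if `rK ⊆ Ω`, then `((r-λ)/(r-λ*)) • (Ω ∼ λ*K) ⊆ Ω ∼ λK` for
all `λ ∈ [λ*, r]`. -/
theorem stmt15 {n : ℕ} (Ω K : Set (EuclideanSpace ℝ (Fin n)))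
    (hΩc : IsCompact Ω) (hΩconv : Convex ℝ Ω) (hΩint : (interior Ω).Nonempty)
    (hKc : IsCompact K) (hKconv : Convex ℝ K) (hKint : (interior K).Nonempty)
    (hKΩ : inrad Ω K • K ⊆ Ω)
    (lstar : ℝ) (hls : lstar ∈ Set.Ico 0 (inrad Ω K)) :
    ∀ l ∈ Set.Icc lstar (inrad Ω K),
      ((inrad Ω K - l) / (inrad Ω K - lstar)) • innerPar Ω K lstar ⊆
        innerPar Ω K l := by
  intro l hl x hx
  set r := inrad Ω K with hr
  obtain ⟨z, hz, rfl⟩ := hx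
  set c : ℝ := (r - l) / (r - lstar) with hc
  have hden : 0 < r - lstar := by linarith [hls.2]
  have hc0 : 0 ≤ c := div_nonneg (by linarith [hl.2]) hden.le
  have hc1 : c ≤ 1 := by
    rw [hc, div_le_one hden]; linarith [hl.1]
  intro y hy
  have h1 : z + lstar • y ∈ Ω := hz y hy
  have h2 : r • y ∈ Ω := hKΩ ⟨y, hy, rfl⟩
  have key := hΩconv h1 h2 hc0 (by linarith : (0:ℝ) ≤ 1 - c) (by ring)
  have heq : c • (z + lstar • y) + (1 - c) • (r • y) = c • z + l • y := by
    have h := hden.ne'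
    match_scalars
    · ring
    · linear_combination (l - r) * inv_mul_cancel₀ h
  rwa [heq] at key
end
end

section
/- Let Ω, K ⊂ ℝ² be planar convex bodies with nonempty interior, r = r(Ω,K), and suppose that Ω ∼ λK = (r − λ)·K (after translation) for all λ ∈ [λ*, r] for some λ* ∈ [0, r). Then Ω = rK, i.e., Ω is homothetic to K. -/
open Pointwise MeasureTheory Set

noncomputable section

/-- in the plane, if `Ω ∼ λK = (r-λ)K` for all `λ ∈ [λ*, r]`,
then `Ω = rK`. -/
theorem stmt18 (Ω K : Set (EuclideanSpace ℝ (Fin 2)))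
    (hΩc : IsCompact Ω) (hΩconv : Convex ℝ Ω) (hΩint : (interior Ω).Nonempty)
    (hKc : IsCompact K) (hKconv : Convex ℝ K) (hKint : (interior K).Nonempty)
    (lstar : ℝ) (hls : lstar ∈ Set.Ico 0 (inrad Ω K))
    (hpar : ∀ l ∈ Set.Icc lstar (inrad Ω K), innerPar Ω K l = (inrad Ω K - l) • K) :
    Ω = inrad Ω K • K := by
  set r := inrad Ω K with hrdef
  have hKne : K.Nonempty := hKint.mono interior_subset
  have hrpos : 0 < r := lt_of_le_of_lt hls.1 hls.2
  -- `r • K ⊆ Ω`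
  have h0 : (0 : EuclideanSpace ℝ (Fin 2)) ∈ innerPar Ω K r := by
    rw [hpar r ⟨hls.2.le, le_refl r⟩, sub_self, zero_smul_set hKne]
    simp
  have hsub : ∀ y ∈ K, r • y ∈ Ω := by
    intro y hy
    simpa using h0 y hy
  apply Subset.antisymm
  · intro x hx
    set l := (lstar + r) / 2 with hl
    have hlstar : lstar < r := hls.2
    have hll : lstar ≤ l := by simp only [hl]; linarith
    have hlr : l < r := by simp only [hl]; linarith
    have hc : 0 < 1 - l / r := by
      rw [sub_pos, div_lt_one hrpos]; exact hlr
    have hcl : 0 ≤ l / r := by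
      apply div_nonneg _ hrpos.le
      have := hls.1; simp only [hl]; linarith
    have hmem : (1 - l / r) • x ∈ innerPar Ω K l := by
      intro y hy
      have h1 : r • y ∈ Ω := hsub y hy
      have hconv := hΩconv hx h1 hc.le hcl (by ring)
      have heq : (l / r) • (r • y) = l • y := by
        rw [smul_smul, div_mul_cancel₀ _ hrpos.ne']
      rwa [heq] at hconv
    rw [hpar l ⟨hll, hlr.le⟩] at hmem
    obtain ⟨k, hk, hkeq⟩ := hmem
    refine ⟨k, hk, ?_⟩
    -- hkeq : (r - l) • k = (1 - l / r) • x
    have hrl : (r - l) = (1 - l / r) * r := by field_simp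
    show r • k = x
    have hkeq' : ((1 - l / r) * r) • k = (1 - l / r) • x := by rw [← hrl]; exact hkeq
    rw [mul_smul] at hkeq'
    exact smul_right_injective (EuclideanSpace ℝ (Fin 2)) hc.ne' hkeq'
  · rintro z ⟨y, hy, rfl⟩
    exact hsub y hy
end
end
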